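/- Let 1/6 < σ < 1/2 and let t₁,…,tₙ be non-negative reals summing to 1. Then either some tᵢ ≥ 1/2 + σ, or there is a partition {1,…,n} = S ∪ T with 1/2 − σ < Σ_{i∈S} tᵢ ≤ Σ_{i∈T} tᵢ < 1/2 + σ. (That is, the Type III alternative of the combinatorial lemma cannot occur when σ > 1/6.) -/

import Mathlib

/-- For `1/6 < σ < 1/2` and non-negative reals summing to `1`, either some `tᵢ ≥ 1/2 + σ`
or there is a partition with both partial sums in `(1/2 − σ, 1/2 + σ)`:
the Type III alternative cannot occur. -/
theorem combinatorial_lemma_large_sigma (n : ℕ) (hn : 0 < n) (σ : ℝ)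
    (hσ1 : 1 / 6 < σ) (hσ2 : σ < 1 / 2)
    (t : Fin n → ℝ) (ht : ∀ i, 0 ≤ t i) (hsum : ∑ i, t i = 1) :
    (∃ i, 1 / 2 + σ ≤ t i) ∨
    (∃ S : Finset (Fin n),
      1 / 2 - σ < ∑ i ∈ S, t i ∧ ∑ i ∈ S, t i ≤ ∑ i ∈ Sᶜ, t i ∧
      ∑ i ∈ Sᶜ, t i < 1 / 2 + σ) := by
  by_cases hbig : ∃ i, 1 / 2 + σ ≤ t i
  · exact Or.inl hbig
  right
  push_neg at hbig
  have hcompl : ∀ A : Finset (Fin n), ∑ i ∈ Aᶜ, t i = 1 - ∑ i ∈ A, t i := by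
    intro A
    have h := Finset.sum_add_sum_compl A t
    rw [hsum] at h
    linarith
  obtain ⟨S, hSmem, hmax0⟩ := Finset.exists_max_image
      (Finset.univ.powerset.filter (fun A => ∑ i ∈ A, t i ≤ 1/2))
      (fun A => ∑ i ∈ A, t i) ⟨∅, by simp⟩
  simp only [Finset.mem_filter, Finset.mem_powerset] at hSmem
  have hmax : ∀ A : Finset (Fin n), ∑ i ∈ A, t i ≤ 1/2 → ∑ i ∈ A, t i ≤ ∑ i ∈ S, t i := by
    intro A hA
    exact hmax0 A (Finset.mem_filter.mpr ⟨Finset.mem_powerset.mpr (Finset.subset_univ A), hA⟩)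
  set s := ∑ i ∈ S, t i with hs_def
  have hS : s ≤ 1/2 := hSmem.2
  have hs0 : 0 ≤ s := Finset.sum_nonneg fun i _ => ht i
  by_cases hlow : 1/2 - σ < s
  · exact ⟨S, hlow, by rw [hcompl]; linarith, by rw [hcompl]; linarith⟩
  push_neg at hlow
  -- `s ≤ 1/2 - σ`.  Key facts about elements of `Sᶜ`.
  have K1 : ∀ i ∈ Sᶜ, 0 < t i → 1/2 < s + t i := by
    intro i hi hpos
    by_contra hle
    push_neg at hle
    have hiS : i ∉ S := Finset.mem_compl.mp hi
    have h := hmax (insert i S) (by rw [Finset.sum_insert hiS]; linarith)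
    rw [Finset.sum_insert hiS] at h
    linarith
  have K3 : ∀ i ∈ Sᶜ, t i ≤ 1/2 := by
    intro i hi
    by_contra hgt
    push_neg at hgt
    have hzero : ∀ j ∈ Sᶜ.erase i, t j = 0 := by
      intro j hj
      have hji : j ≠ i := (Finset.mem_erase.mp hj).1
      have hjc : j ∈ Sᶜ := (Finset.mem_erase.mp hj).2
      by_contra hne
      have hpos : 0 < t j := lt_of_le_of_ne (ht j) (Ne.symm hne)
      have h1 := K1 j hjc hpos
      have hpair : t i + t j ≤ ∑ k ∈ Sᶜ, t k := by
        have hsub : ({i, j} : Finset (Fin n)) ⊆ Sᶜ := by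
          intro k hk
          simp only [Finset.mem_insert, Finset.mem_singleton] at hk
          rcases hk with rfl | rfl
          · exact hi
          · exact hjc
        calc t i + t j = ∑ k ∈ ({i, j} : Finset (Fin n)), t k :=
              (Finset.sum_pair (Ne.symm hji)).symm
          _ ≤ _ := Finset.sum_le_sum_of_subset_of_nonneg hsub (fun k _ _ => ht k)
      rw [hcompl] at hpair
      linarith
    have hsum_eq : ∑ k ∈ Sᶜ, t k = t i := by
      rw [← Finset.add_sum_erase _ _ hi, Finset.sum_eq_zero hzero, add_zero]
    rw [hcompl] at hsum_eq
    have := hbig i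
    linarith
  -- find a first positive element of `Sᶜ`
  obtain ⟨i, hi, hipos⟩ : ∃ i ∈ Sᶜ, 0 < t i := by
    by_contra hc
    push_neg at hc
    have h0 : ∑ k ∈ Sᶜ, t k ≤ 0 := Finset.sum_nonpos hc
    rw [hcompl] at h0
    linarith
  have hti_le : t i ≤ s := by
    have h := hmax {i} (by rw [Finset.sum_singleton]; exact K3 i hi)
    rwa [Finset.sum_singleton] at h
  -- find a second positive element
  have herase : ∑ k ∈ Sᶜ.erase i, t k = 1 - s - t i := by
    have h := Finset.add_sum_erase Sᶜ t hi
    rw [hcompl] at h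
    linarith
  obtain ⟨j, hj, hjpos⟩ : ∃ j ∈ Sᶜ.erase i, 0 < t j := by
    by_contra hc
    push_neg at hc
    have h0 : ∑ k ∈ Sᶜ.erase i, t k ≤ 0 := Finset.sum_nonpos hc
    rw [herase] at h0
    linarith
  have hji : j ≠ i := (Finset.mem_erase.mp hj).1
  have hjc : j ∈ Sᶜ := (Finset.mem_erase.mp hj).2
  have htj_le : t j ≤ s := by
    have h := hmax {j} (by rw [Finset.sum_singleton]; exact K3 j hjc)
    rwa [Finset.sum_singleton] at h
  have hKi := K1 i hi hipos
  have hKj := K1 j hjc hjpos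
  have hpair_sum : ∑ k ∈ ({i, j} : Finset (Fin n)), t k = t i + t j :=
    Finset.sum_pair (Ne.symm hji)
  by_cases hp : t i + t j ≤ 1/2
  · exfalso
    have h := hmax {i, j} (by rw [hpair_sum]; exact hp)
    rw [hpair_sum] at h
    linarith
  push_neg at hp
  refine ⟨({i, j} : Finset (Fin n))ᶜ, ?_, ?_, ?_⟩
  · rw [hcompl, hpair_sum]
    linarith
  · rw [compl_compl, hcompl, hpair_sum]
    linarith
  · rw [compl_compl, hpair_sum]
    linarith
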